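/- Fix an integer n and positive reals λ_0, λ_1, λ_2, … and nonnegative reals μ_0, μ_1, μ_2, …. For an integer q with 1 ≤ q ≤ n − 2, write m_q = n − q for the number of data disks when q parity disks are used, and define the closed-form mean time to data loss MTTDL_q = ((q·μ_{q−1} + λ_q·m_q)/∏_{i=0}^{q} λ_i·(m_q + i))·Σ_{x=0}^{q−1} ∏_{j=0, j≠x}^{q−1} Λ_x(j) + 1/(λ_q·m_q), where Λ_x(j) = λ_j·(n − j) + (if j ≥ x then j·μ_{j−1} else 0) and j·μ_{j−1} is interpreted as 0 when j = 0. Then for every p with 1 ≤ p ≤ n − 3 and m = n − p ≥ 2, the recursion MTTDL_{p+1} = MTTDL_p + ((p+1)·μ_p/(λ_{p+1}·(m − 1)))·MTTDL_p + 1/(λ_{p+1}·(m − 1)) holds. (Theorem on the recursive relation for MTTDL_p for a disk array of fixed total size n.) -/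

import Mathlib

open Finset

/-- The closed-form mean time to data loss of a disk array with `n` disks in total,
`q` of which are parity disks (so `m_q = n - q` data disks):
`MTTDL_q = ((q μ_{q−1} + λ_q m_q)/∏_{i=0}^{q} λ_i (m_q + i)) ∑_{x=0}^{q−1} ∏_{j≠x} Λ_x(j)
  + 1/(λ_q m_q)`. -/
noncomputable def MTTDLcf (n : ℕ) (lam mu : ℕ → ℝ) (q : ℕ) : ℝ :=
  (((q : ℝ) * mu (q - 1) + lam q * ((n - q : ℕ) : ℝ)) /
      ∏ i ∈ Finset.range (q + 1), lam i * (((n - q : ℕ) : ℝ) + i)) *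
    ∑ x ∈ Finset.range q, ∏ j ∈ (Finset.range q).erase x,
      (lam j * ((n : ℝ) - j) + if x ≤ j then (j : ℝ) * mu (j - 1) else 0) +
  1 / (lam q * ((n - q : ℕ) : ℝ))

set_option maxHeartbeats 1000000 in
/-- Theorem on the recursive relation for `MTTDL_p` for a disk array of fixed total size `n`
(Theorem 3.4 / Appendix B):
`MTTDL_{p+1} = MTTDL_p + ((p+1) μ_p / (λ_{p+1}(m−1))) MTTDL_p + 1/(λ_{p+1}(m−1))`,
where `m = n − p`. -/
theorem mttdl_recursion
    (n : ℕ) (lam mu : ℕ → ℝ)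
    (hlam : ∀ i, 0 < lam i) (hmu : ∀ i, 0 ≤ mu i)
    (p : ℕ) (hp : 1 ≤ p) (hpn : p ≤ n - 3)
    (m : ℕ) (hm : m = n - p) (hm2 : 2 ≤ m) :
    MTTDLcf n lam mu (p + 1) =
      MTTDLcf n lam mu p +
        (((p : ℝ) + 1) * mu p / (lam (p + 1) * ((m : ℝ) - 1))) * MTTDLcf n lam mu p +
        1 / (lam (p + 1) * ((m : ℝ) - 1)) := by
  have hn : p + 3 ≤ n := by omega
  have hnm : n = m + p := by omega
  have hcast1 : ((n - p : ℕ) : ℝ) = (m : ℝ) := by rw [show n - p = m by omega]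
  have hcast2 : ((n - (p + 1) : ℕ) : ℝ) = (m : ℝ) - 1 := by
    rw [show n - (p + 1) = m - 1 by omega]
    push_cast [Nat.cast_sub (show 1 ≤ m by omega)]
    ring
  have hnR : (n : ℝ) = (m : ℝ) + p := by rw [hnm]; push_cast; ring
  -- abbreviations
  set Q : ℝ := ∏ j ∈ Finset.range p, lam j * ((n : ℝ) - j) with hQdef
  set P : ℝ := ∏ i ∈ Finset.range (p + 1), lam i * ((m : ℝ) + i) with hPdef
  set S : ℝ := ∑ x ∈ Finset.range p, ∏ j ∈ (Finset.range p).erase x,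
      (lam j * ((n : ℝ) - j) + if x ≤ j then (j : ℝ) * mu (j - 1) else 0) with hSdef
  -- key 1 : product splitting
  have key1 : ∏ i ∈ Finset.range (p + 1 + 1), lam i * (((m : ℝ) - 1) + i)
      = lam (p + 1) * ((m : ℝ) - 1) * P := by
    rw [hPdef, Finset.prod_mul_distrib, Finset.prod_mul_distrib,
      Finset.prod_range_succ (f := lam), Finset.prod_range_succ' (f := fun i => ((m : ℝ) - 1) + i)]
    have h1 : ∏ i ∈ Finset.range (p + 1), ((m : ℝ) - 1 + (i + 1 : ℕ))
        = ∏ i ∈ Finset.range (p + 1), ((m : ℝ) + i) := by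
      apply Finset.prod_congr rfl; intro i _; push_cast; ring
    rw [h1]; ring
  -- key 3 : P = lam p * m * Q
  have key3 : P = lam p * (m : ℝ) * Q := by
    have hrev : ∏ j ∈ Finset.range p, ((n : ℝ) - j)
        = ∏ j ∈ Finset.range p, ((m : ℝ) + 1 + j) := by
      conv_rhs => rw [← Finset.prod_range_reflect]
      apply Finset.prod_congr rfl
      intro j hj
      simp only [Finset.mem_range] at hj
      have h1 : ((p - 1 - j : ℕ) : ℝ) = (p : ℝ) - 1 - j := by
        rw [show p - 1 - j = p - (j + 1) by omega, Nat.cast_sub (by omega)]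
        push_cast; ring
      rw [h1, hnR]; ring
    have h2 : ∏ i ∈ Finset.range (p + 1), ((m : ℝ) + i)
        = (m : ℝ) * ∏ i ∈ Finset.range p, ((m : ℝ) + 1 + i) := by
      rw [Finset.prod_range_succ' (f := fun i => (m : ℝ) + i)]
      have h3 : ∏ i ∈ Finset.range p, ((m : ℝ) + (i + 1 : ℕ))
          = ∏ i ∈ Finset.range p, ((m : ℝ) + 1 + i) := by
        apply Finset.prod_congr rfl; intro i _; push_cast; ring
      rw [h3]; ring
    rw [hPdef, hQdef, Finset.prod_mul_distrib, Finset.prod_mul_distrib,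
      Finset.prod_range_succ (f := lam), h2, hrev]
    ring
  -- key 2 : sum splitting
  have key2 : ∑ x ∈ Finset.range (p + 1), ∏ j ∈ (Finset.range (p + 1)).erase x,
      (lam j * ((n : ℝ) - j) + if x ≤ j then (j : ℝ) * mu (j - 1) else 0)
      = (lam p * (m : ℝ) + (p : ℝ) * mu (p - 1)) * S + Q := by
    rw [Finset.sum_range_succ]
    have hlast : ∏ j ∈ (Finset.range (p + 1)).erase p,
        (lam j * ((n : ℝ) - j) + if p ≤ j then (j : ℝ) * mu (j - 1) else 0) = Q := by
      rw [Finset.range_add_one, Finset.erase_insert (by simp)]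
      apply Finset.prod_congr rfl
      intro j hj
      simp only [Finset.mem_range] at hj
      rw [if_neg (by omega), add_zero]
    have hsum : ∀ x ∈ Finset.range p, ∏ j ∈ (Finset.range (p + 1)).erase x,
        (lam j * ((n : ℝ) - j) + if x ≤ j then (j : ℝ) * mu (j - 1) else 0)
        = (lam p * (m : ℝ) + (p : ℝ) * mu (p - 1)) *
          ∏ j ∈ (Finset.range p).erase x,
            (lam j * ((n : ℝ) - j) + if x ≤ j then (j : ℝ) * mu (j - 1) else 0) := by
      intro x hx
      simp only [Finset.mem_range] at hx
      have hxp : x ≠ p := by omega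
      rw [Finset.range_add_one, Finset.erase_insert_of_ne (by omega),
        Finset.prod_insert (by simp)]
      congr 1
      rw [if_pos (by omega), hnR]
      push_cast; ring
    rw [Finset.sum_congr rfl hsum, ← Finset.mul_sum, hlast, hSdef]
  -- assemble
  have hlamp := hlam p
  have hlamp1 := hlam (p + 1)
  have hmpos : (0 : ℝ) < (m : ℝ) := by positivity
  have hm1pos : (0 : ℝ) < (m : ℝ) - 1 := by
    have : (2 : ℝ) ≤ (m : ℝ) := by exact_mod_cast hm2
    linarith
  have hQpos : 0 < Q := by
    rw [hQdef]
    apply Finset.prod_pos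
    intro j hj
    simp only [Finset.mem_range] at hj
    have : (j : ℝ) < (n : ℝ) := by exact_mod_cast (by omega : j < n)
    have := hlam j
    nlinarith
  simp only [MTTDLcf, hcast1, hcast2, Nat.add_sub_cancel]
  rw [key1, key2, ← hPdef, ← hSdef, key3]
  have h1 : lam p ≠ 0 := ne_of_gt hlamp
  have h2 : lam (p + 1) ≠ 0 := ne_of_gt hlamp1
  have h3 : (m : ℝ) ≠ 0 := ne_of_gt hmpos
  have h4 : (m : ℝ) - 1 ≠ 0 := ne_of_gt hm1pos
  have h5 : Q ≠ 0 := ne_of_gt hQpos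
  field_simp
  push_cast
  ring
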